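/- For the type B_n root system with simple roots α_i = e_i − e_{i+1} (i < n) and α_n = e_n, if exactly the simple root α_k is painted noncompact, then the number of noncompact positive roots equals k(2n−2k+1), i.e., the noncompact positive roots are exactly those e_i ± e_j and e_i whose expansion in simple roots involves α_k an odd number of times. -/

import Mathlib

/-- The positive roots of B_n, as integer coordinate vectors: e_i − e_j and e_i + e_j for
i < j, and e_i. -/
def BnPosRoots (n : ℕ) : Finset (Fin n → ℤ) :=
  ((Finset.univ.filter (fun p : Fin n × Fin n => p.1 < p.2)).image
      (fun p => Pi.single p.1 (1 : ℤ) - Pi.single p.2 (1 : ℤ))) ∪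
    ((Finset.univ.filter (fun p : Fin n × Fin n => p.1 < p.2)).image
      (fun p => Pi.single p.1 (1 : ℤ) + Pi.single p.2 (1 : ℤ))) ∪
    (Finset.univ.image (fun i : Fin n => Pi.single i (1 : ℤ)))

section aux

variable {n : ℕ}

lemma totalsum_sub (p : Fin n × Fin n) :
    ∑ j, (Pi.single p.1 (1 : ℤ) - Pi.single p.2 (1 : ℤ) : Fin n → ℤ) j = 0 := by
  simp [Finset.sum_sub_distrib, Finset.sum_pi_single']

lemma totalsum_add (p : Fin n × Fin n) :
    ∑ j, (Pi.single p.1 (1 : ℤ) + Pi.single p.2 (1 : ℤ) : Fin n → ℤ) j = 2 := by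
  simp [Finset.sum_add_distrib, Finset.sum_pi_single']

lemma totalsum_single (i : Fin n) :
    ∑ j, (Pi.single i (1 : ℤ)) j = 1 := by
  simp [Finset.sum_pi_single']

lemma injOn_sub : Set.InjOn (fun p : Fin n × Fin n =>
    (Pi.single p.1 (1 : ℤ) - Pi.single p.2 (1 : ℤ) : Fin n → ℤ)) {p | p.1 < p.2} := by
  intro p hp q hq h
  simp only [Set.mem_setOf_eq] at hp hq
  have hp' : p.1 ≠ p.2 := ne_of_lt hp
  have hq' : q.1 ≠ q.2 := ne_of_lt hq
  have h1 : p.1 = q.1 := by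
    by_contra hc
    have e := congrFun h p.1
    simp [Pi.single_apply, hp', hc] at e
    all_goals (split_ifs at e <;> omega)
  have h2 : p.2 = q.2 := by
    by_contra hc
    have e := congrFun h p.2
    simp [Pi.single_apply, Ne.symm hp', hc, ← h1] at e
    all_goals (split_ifs at e <;> omega)
  exact Prod.ext h1 h2

lemma injOn_add : Set.InjOn (fun p : Fin n × Fin n =>
    (Pi.single p.1 (1 : ℤ) + Pi.single p.2 (1 : ℤ) : Fin n → ℤ)) {p | p.1 < p.2} := by
  intro p hp q hq h
  simp only [Set.mem_setOf_eq] at hp hq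
  have hp' : p.1 ≠ p.2 := ne_of_lt hp
  have hq' : q.1 ≠ q.2 := ne_of_lt hq
  have h1 : p.1 = q.1 := by
    by_contra hc
    have hpq2 : p.1 = q.2 := by
      by_contra hc2
      have e := congrFun h p.1
      simp [Pi.single_apply, hp', hc, hc2] at e
      all_goals omega
    have hq1p2 : q.1 = p.2 := by
      by_contra hc2
      have e := congrFun h q.1
      simp [Pi.single_apply, Ne.symm hc, hc2, hq'] at e
      all_goals omega
    rw [hq1p2] at hq
    rw [hpq2] at hp
    exact absurd (hp.trans hq) (lt_irrefl _)
  have h2 : p.2 = q.2 := by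
    by_contra hc
    have hne : p.2 ≠ q.1 := by
      rw [← h1]; exact Ne.symm hp'
    have e := congrFun h p.2
    simp [Pi.single_apply, Ne.symm hp', hne, hc] at e
    all_goals omega
  exact Prod.ext h1 h2

lemma inj_single : Function.Injective (fun i : Fin n => Pi.single i (1 : ℤ)) := by
  intro a b h
  by_contra hc
  have e := congrFun h a
  simp [Pi.single_apply, hc] at e

lemma partial_sum_single (k : Fin n) (a : Fin n) :
    ∑ i ∈ Finset.Iic k, (Pi.single a (1 : ℤ)) i = if a ≤ k then 1 else 0 := by
  rw [Finset.sum_pi_single']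
  simp [Finset.mem_Iic]

end aux

/-- For B_n with simple roots α_i = e_i − e_{i+1} (i < n) and α_n = e_n, if
exactly the simple root α_k is painted noncompact, the number of noncompact positive roots
(those whose expansion involves α_k an odd number of times; the coefficient of α_k of a
vector v is the partial sum Σ_{i ≤ k} v_i) equals k(2n − 2k + 1) (here k is 1-indexed;
with the 0-indexed k : Fin n below this reads (k+1)·(2(n − (k+1)) + 1)). -/
theorem stmt13 (n : ℕ) (k : Fin n) :
    ((BnPosRoots n).filter
        (fun v => ¬ (2 ∣ ∑ i ∈ Finset.Iic k, v i))).card =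
      (k.val + 1) * (2 * (n - (k.val + 1)) + 1) := by
  classical
  have hk : (k : ℕ) < n := k.isLt
  set P : (Fin n → ℤ) → Prop := fun v => ¬ (2 ∣ ∑ i ∈ Finset.Iic k, v i) with hP
  set s : Finset (Fin n × Fin n) := Finset.univ.filter (fun p => p.1 < p.2) with hs
  set fsub : Fin n × Fin n → (Fin n → ℤ) :=
    fun p => Pi.single p.1 (1 : ℤ) - Pi.single p.2 (1 : ℤ) with hfsub
  set fadd : Fin n × Fin n → (Fin n → ℤ) :=
    fun p => Pi.single p.1 (1 : ℤ) + Pi.single p.2 (1 : ℤ) with hfadd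
  set g : Fin n → (Fin n → ℤ) := fun i => Pi.single i (1 : ℤ) with hg
  -- disjointness via total sums
  have hd1 : Disjoint ((s.image fsub).filter P) ((s.image fadd).filter P) := by
    rw [Finset.disjoint_left]
    intro v h1 h2
    rw [Finset.mem_filter, Finset.mem_image] at h1 h2
    obtain ⟨⟨p, _, hp⟩, _⟩ := h1
    obtain ⟨⟨q, _, hq⟩, _⟩ := h2
    have e1 : ∑ j, v j = 0 := by rw [← hp]; exact totalsum_sub p
    have e2 : ∑ j, v j = 2 := by rw [← hq]; exact totalsum_add q
    omega
  have hd2 : Disjoint (((s.image fsub).filter P) ∪ ((s.image fadd).filter P))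
      ((Finset.univ.image g).filter P) := by
    rw [Finset.disjoint_left]
    intro v h1 h2
    rw [Finset.mem_filter, Finset.mem_image] at h2
    obtain ⟨⟨i, _, hi⟩, _⟩ := h2
    have e3 : ∑ j, v j = 1 := by rw [← hi]; exact totalsum_single i
    rw [Finset.mem_union] at h1
    rcases h1 with h1 | h1 <;> rw [Finset.mem_filter, Finset.mem_image] at h1
    · obtain ⟨⟨p, _, hp⟩, _⟩ := h1
      have e1 : ∑ j, v j = 0 := by rw [← hp]; exact totalsum_sub p
      omega
    · obtain ⟨⟨q, _, hq⟩, _⟩ := h1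
      have e2 : ∑ j, v j = 2 := by rw [← hq]; exact totalsum_add q
      omega
  have hcard : ((BnPosRoots n).filter P).card =
      ((s.image fsub).filter P).card + ((s.image fadd).filter P).card +
      ((Finset.univ.image g).filter P).card := by
    rw [BnPosRoots, Finset.filter_union, Finset.filter_union,
      Finset.card_union_of_disjoint hd2, Finset.card_union_of_disjoint hd1]
  -- the partial-sum parity conditions
  have hsumsub : ∀ p : Fin n × Fin n, ∑ i ∈ Finset.Iic k, fsub p i =
      (if p.1 ≤ k then (1 : ℤ) else 0) - (if p.2 ≤ k then (1 : ℤ) else 0) := by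
    intro p
    rw [hfsub]
    simp only [Pi.sub_apply, Finset.sum_sub_distrib, partial_sum_single]
  have hsumadd : ∀ p : Fin n × Fin n, ∑ i ∈ Finset.Iic k, fadd p i =
      (if p.1 ≤ k then (1 : ℤ) else 0) + (if p.2 ≤ k then (1 : ℤ) else 0) := by
    intro p
    rw [hfadd]
    simp only [Pi.add_apply, Finset.sum_add_distrib, partial_sum_single]
  -- the pair count
  have hpair : ∀ f : Fin n × Fin n → (Fin n → ℤ),
      (∀ p : Fin n × Fin n, (P (f p) ↔ (p.1 ≤ k ∧ ¬ p.2 ≤ k) ∨ (p.2 ≤ k ∧ ¬ p.1 ≤ k))) →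
      (s.filter (fun p => P (f p))) = Finset.Iic k ×ˢ Finset.Ioi k := by
    intro f hf
    ext p
    rw [Finset.mem_filter, hf p, Finset.mem_product, hs, Finset.mem_filter,
      Finset.mem_Iic, Finset.mem_Ioi]
    simp only [Finset.mem_univ, true_and]
    constructor
    · rintro ⟨hlt, (⟨h1, h2⟩ | ⟨h1, h2⟩)⟩
      · exact ⟨h1, lt_of_not_ge h2⟩
      · exact absurd (hlt.trans_le h1) (not_lt_of_ge (le_of_not_ge h2))
    · rintro ⟨h1, h2⟩
      exact ⟨h1.trans_lt h2, Or.inl ⟨h1, not_le_of_gt h2⟩⟩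
  have hfsubP : ∀ p : Fin n × Fin n,
      P (fsub p) ↔ (p.1 ≤ k ∧ ¬ p.2 ≤ k) ∨ (p.2 ≤ k ∧ ¬ p.1 ≤ k) := by
    intro p
    rw [hP]
    simp only [hsumsub p]
    by_cases h1 : p.1 ≤ k <;> by_cases h2 : p.2 ≤ k <;> simp [h1, h2] <;> decide
  have hfaddP : ∀ p : Fin n × Fin n,
      P (fadd p) ↔ (p.1 ≤ k ∧ ¬ p.2 ≤ k) ∨ (p.2 ≤ k ∧ ¬ p.1 ≤ k) := by
    intro p
    rw [hP]
    simp only [hsumadd p]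
    by_cases h1 : p.1 ≤ k <;> by_cases h2 : p.2 ≤ k <;> simp [h1, h2] <;> decide
  have hprodcard : (Finset.Iic k ×ˢ Finset.Ioi k).card = ((k : ℕ) + 1) * (n - 1 - k) := by
    rw [Finset.card_product, Fin.card_Iic, Fin.card_Ioi]
  have hset : ∀ q : (Fin n → ℤ) → Prop, ∀ _ : DecidablePred q,
      ↑(s.filter (fun p => q (fsub p))) ⊆ {p : Fin n × Fin n | p.1 < p.2} ∧
      ↑(s.filter (fun p => q (fadd p))) ⊆ {p : Fin n × Fin n | p.1 < p.2} := by
    intro q _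
    constructor <;>
    · intro p hp
      simp only [Finset.coe_filter, Set.mem_setOf_eq, hs, Finset.mem_filter,
        Finset.mem_univ, true_and] at hp
      exact hp.1
  have hsub_card : ((s.image fsub).filter P).card = ((k : ℕ) + 1) * (n - 1 - k) := by
    rw [Finset.filter_image,
      Finset.card_image_of_injOn (Set.InjOn.mono ((hset P inferInstance).1) injOn_sub),
      hpair fsub hfsubP, hprodcard]
  have hadd_card : ((s.image fadd).filter P).card = ((k : ℕ) + 1) * (n - 1 - k) := by
    rw [Finset.filter_image,
      Finset.card_image_of_injOn (Set.InjOn.mono ((hset P inferInstance).2) injOn_add),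
      hpair fadd hfaddP, hprodcard]
  have hg_card : ((Finset.univ.image g).filter P).card = (k : ℕ) + 1 := by
    rw [Finset.filter_image,
      Finset.card_image_of_injOn (inj_single.injOn)]
    have : Finset.univ.filter (fun i => P (g i)) = Finset.Iic k := by
      ext i
      rw [Finset.mem_filter, hP, Finset.mem_Iic]
      simp only [Finset.mem_univ, true_and, hg, partial_sum_single]
      by_cases h : i ≤ k <;> simp [h] <;> decide
    rw [this, Fin.card_Iic]
  rw [hcard, hsub_card, hadd_card, hg_card]
  have h : n - 1 - (k : ℕ) = n - ((k : ℕ) + 1) := by omega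
  rw [h]
  ring
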